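/- Let F and G be cdf's of lattice distributions with spacings c_F > 0 and c_G > 0 between neighbouring support points. Then F ≼_∧ G, F ≼_∨ G, and the condition [q_b ≤ p_a for all dispersion-relevant pairs (a,b) and c_F ≤ c_G] are all equivalent. -/

import Mathlib

/-- A purposive discrete distribution: support indexed by an interval of `ℤ`
with at least two elements, strictly increasing support points `x` and
positive probabilities `p` summing to one. -/
structure DiscDist where
  A : Set ℤ
  x : ℤ → ℝ
  p : ℤ → ℝ
  hA2 : ∃ a b, a ∈ A ∧ b ∈ A ∧ a ≠ b
  hAconn : ∀ a b c : ℤ, a ∈ A → c ∈ A → a ≤ b → b ≤ c → b ∈ A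
  hmono : ∀ a b : ℤ, a ∈ A → b ∈ A → a < b → x a < x b
  hpos : ∀ a ∈ A, 0 < p a
  hzero : ∀ a ∉ A, p a = 0
  hsummable : Summable p
  hsum : ∑' a, p a = 1

/-- Cumulative probability strictly below index `a`, i.e. `F(x_{a-1})`. -/
noncomputable def DiscDist.L (D : DiscDist) (a : ℤ) : ℝ :=
  ∑' i : ℤ, if i < a then D.p i else 0

/-- The relation `a ▷◁ b`: the jump intervals `(F(x_{a-1}), F(x_a))` and
`(G(y_{b-1}), G(y_b))` intersect. -/
def DRel (F G : DiscDist) (a b : ℤ) : Prop :=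
  a ∈ F.A ∧ b ∈ G.A ∧
    max (F.L a) (G.L b) < min (F.L (a + 1)) (G.L (b + 1))

/-- The ∧-discrete dispersive order `F ≼_∧ G`. -/
def discoA (F G : DiscDist) : Prop :=
  (∀ a b, DRel F G a b → G.p b ≤ F.p a) ∧
  (∀ a b, DRel F G a b → DRel F G (a - 1) (b - 1) →
    F.x a - F.x (a - 1) ≤ G.x b - G.x (b - 1))

/-- The ∨-discrete dispersive order `F ≼_∨ G`. -/
def discoO (F G : DiscDist) : Prop :=
  (∀ a b, DRel F G a b → G.p b ≤ F.p a) ∧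
  (∀ a b, a ∈ F.A → a - 1 ∈ F.A → b ∈ G.A → b - 1 ∈ G.A →
    (DRel F G a b ∨ DRel F G (a - 1) (b - 1)) →
    F.x a - F.x (a - 1) ≤ G.x b - G.x (b - 1))

/-- Cumulative distribution function of a discrete distribution. -/
noncomputable def DiscDist.cdf (D : DiscDist) (t : ℝ) : ℝ :=
  ∑' a : ℤ, if D.x a ≤ t then D.p a else 0

namespace DiscDist
open Classical

variable (D : DiscDist)

lemma pnn : ∀ i, 0 ≤ D.p i := by
  intro i
  by_cases h : i ∈ D.A
  · exact (D.hpos i h).le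
  · simp [D.hzero i h]

lemma sum_ite (q : ℤ → Prop) [DecidablePred q] :
    Summable (fun i => if q i then D.p i else 0) := by
  have h := D.hsummable.indicator {i | q i}
  refine h.congr (fun i => ?_)
  by_cases hq : q i <;> simp [Set.indicator_apply, Set.mem_setOf_eq, hq]

lemma L_mono {a b : ℤ} (hab : a ≤ b) : D.L a ≤ D.L b := by
  refine Summable.tsum_le_tsum (fun i => ?_) (D.sum_ite _) (D.sum_ite _)
  by_cases h1 : i < a
  · simp [h1, lt_of_lt_of_le h1 hab]
  · by_cases h2 : i < b <;> simp [h1, h2, D.pnn i]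

lemma L_succ (a : ℤ) : D.L (a + 1) = D.L a + D.p a := by
  have key : ∀ i : ℤ, (if i < a + 1 then D.p i else 0)
      = (if i < a then D.p i else 0) + (if i = a then D.p a else 0) := by
    intro i
    rcases lt_trichotomy i a with h | h | h
    · simp [h, h.trans (lt_add_one a), h.ne]
    · simp [h]
    · have h1 : ¬ i < a + 1 := by omega
      have h2 : ¬ i < a := by omega
      simp [h1, h2, h.ne']
  rw [DiscDist.L, tsum_congr key, Summable.tsum_add (D.sum_ite _) ?_, tsum_ite_eq]
  · rfl
  · exact summable_of_ne_finset_zero (s := {a}) (by intro i hi; simp at hi; simp [hi])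

lemma L_nonneg (a : ℤ) : 0 ≤ D.L a :=
  tsum_nonneg (fun i => by by_cases h : i < a <;> simp [h, D.pnn i])

lemma L_le_one (a : ℤ) : D.L a ≤ 1 := by
  have := Summable.tsum_le_tsum (f := fun i => if i < a then D.p i else 0) (g := D.p)
    (fun i => by by_cases h : i < a <;> simp [h, D.pnn i]) (D.sum_ite _) D.hsummable
  rwa [D.hsum] at this

lemma mem_of_p_ne_zero {a : ℤ} (h : D.p a ≠ 0) : a ∈ D.A := by
  by_contra hc
  exact h (D.hzero a hc)

lemma exists_lt_of_L_pos {a : ℤ} (h : 0 < D.L a) : ∃ i, i < a ∧ i ∈ D.A := by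
  by_contra hc
  push_neg at hc
  have hz : ∀ i : ℤ, (if i < a then D.p i else 0) = 0 := by
    intro i
    by_cases h1 : i < a
    · rw [if_pos h1, D.hzero i (hc i h1)]
    · rw [if_neg h1]
  have : D.L a = 0 := by
    rw [DiscDist.L, tsum_congr hz, tsum_zero]
  linarith

lemma exists_L_gt {v : ℝ} (hv : v < 1) : ∃ a : ℤ, v < D.L a := by
  have hs : HasSum D.p 1 := by
    have := D.hsummable.hasSum
    rwa [D.hsum] at this
  obtain ⟨s, hsv⟩ := (hs.eventually (eventually_gt_nhds hv)).exists
  obtain ⟨M, hM⟩ := s.bddAbove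
  refine ⟨M + 1, lt_of_lt_of_le hsv ?_⟩
  have he : ∑ i ∈ s, D.p i = ∑ i ∈ s, (if i < M + 1 then D.p i else 0) :=
    Finset.sum_congr rfl (fun i hi => by
      rw [if_pos]
      have := hM (Finset.mem_coe.mpr hi)
      omega)
  rw [he]
  exact Summable.sum_le_tsum s (fun i _ => by by_cases h : i < M + 1 <;> simp [h, D.pnn i])
    (D.sum_ite _)

lemma exists_L_lt {ε : ℝ} (hε : 0 < ε) : ∃ N : ℤ, D.L N < ε := by
  have hs : HasSum D.p 1 := by
    have := D.hsummable.hasSum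
    rwa [D.hsum] at this
  obtain ⟨s, hsv⟩ := (hs.eventually (eventually_gt_nhds (sub_lt_self 1 hε))).exists
  obtain ⟨m, hm⟩ := s.bddBelow
  refine ⟨m, ?_⟩
  have key : D.L m + ∑ i ∈ s, D.p i ≤ 1 := by
    rw [sum_eq_tsum_indicator, DiscDist.L,
      ← Summable.tsum_add (D.sum_ite _) (D.hsummable.indicator _)]
    calc ∑' i : ℤ, ((if i < m then D.p i else 0) + Set.indicator (↑s) D.p i)
        ≤ ∑' i, D.p i := by
          refine Summable.tsum_le_tsum (fun i => ?_)
            ((D.sum_ite _).add (D.hsummable.indicator _)) D.hsummable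
          by_cases h1 : i < m
          · have h2 : i ∉ (↑s : Set ℤ) := fun hi => absurd (hm hi) (by omega)
            simp [h1, Set.indicator_apply, h2]
          · by_cases h2 : i ∈ (↑s : Set ℤ) <;>
              simp [h1, Set.indicator_apply, h2, D.pnn i]
      _ = 1 := D.hsum
  linarith

lemma L_lt_one {a : ℤ} (ha : a ∈ D.A) : D.L a < 1 := by
  have h1 := D.L_le_one (a + 1)
  have h2 := D.L_succ a
  have h3 := D.hpos a ha
  linarith

lemma L_pos {a : ℤ} (ha : a - 1 ∈ D.A) : 0 < D.L a := by
  have h2 := D.L_succ (a - 1)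
  have h3 : a - 1 + 1 = a := by ring
  rw [h3] at h2
  have h4 := D.hpos _ ha
  have h5 := D.L_nonneg (a - 1)
  linarith

lemma exists_interior : ∃ a, a ∈ D.A ∧ a - 1 ∈ D.A := by
  obtain ⟨a, b, ha, hb, hab⟩ := D.hA2
  rcases lt_or_gt_of_ne hab with h | h
  · exact ⟨b, hb, D.hAconn a (b - 1) b ha hb (by omega) (by omega)⟩
  · exact ⟨a, ha, D.hAconn b (a - 1) a hb ha (by omega) (by omega)⟩

end DiscDist

lemma DRel_symm {F G : DiscDist} {a b : ℤ} (h : DRel F G a b) : DRel G F b a :=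
  ⟨h.2.1, h.1, by rw [max_comm, min_comm]; exact h.2.2⟩

lemma onesided (F G : DiscDist) (a0 j : ℤ) (ha0 : a0 ∈ F.A) (ha0' : a0 - 1 ∈ F.A)
    (hj : j ∈ G.A) (hj' : j - 1 ∈ G.A) (huv : F.L a0 ≤ G.L j) :
    ∃ a b, DRel F G a b ∧ DRel F G (a - 1) (b - 1) := by
  classical
  set u := F.L a0 with hu
  have hu0 : 0 < u := F.L_pos ha0'
  -- least b0 with interior boundary `G.L b0 ≥ u`
  obtain ⟨N, hN⟩ := G.exists_L_lt hu0
  have hbdd : ∃ lb : ℤ, ∀ z : ℤ, (z ∈ G.A ∧ z - 1 ∈ G.A ∧ u ≤ G.L z) → lb ≤ z := by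
    refine ⟨N, fun z hz => ?_⟩
    by_contra hc
    push_neg at hc
    have := G.L_mono (show z ≤ N by omega)
    linarith [hz.2.2]
  obtain ⟨b0, hb0, hb0min⟩ := Int.exists_least_of_bdd
    (P := fun z => z ∈ G.A ∧ z - 1 ∈ G.A ∧ u ≤ G.L z) hbdd ⟨j, hj, hj', huv⟩
  obtain ⟨hb0A, hb0A', huv0⟩ := hb0
  set v := G.L b0 with hv
  have hv1 : v < 1 := G.L_lt_one hb0A
  -- greatest a1 with `F.L a1 ≤ v`
  obtain ⟨a', ha'⟩ := F.exists_L_gt hv1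
  have hbdd2 : ∃ ub : ℤ, ∀ z : ℤ, F.L z ≤ v → z ≤ ub := by
    refine ⟨a', fun z hz => ?_⟩
    by_contra hc
    push_neg at hc
    have := F.L_mono (show a' ≤ z by omega)
    linarith
  obtain ⟨a1, ha1v, ha1max⟩ := Int.exists_greatest_of_bdd
    (P := fun z => F.L z ≤ v) hbdd2 ⟨a0, huv0⟩
  have hva1 : v < F.L (a1 + 1) := by
    by_contra hc
    push_neg at hc
    have := ha1max (a1 + 1) hc
    omega
  have hua1 : u ≤ F.L a1 := le_trans (le_refl u) (F.L_mono (ha1max a0 huv0))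
  have ha1A : a1 ∈ F.A := by
    have h1 := F.L_succ a1
    have hp : 0 < F.p a1 := by linarith
    exact F.mem_of_p_ne_zero hp.ne'
  have ha1A' : a1 - 1 ∈ F.A := by
    obtain ⟨i, hi, hiA⟩ := F.exists_lt_of_L_pos (lt_of_lt_of_le hu0 hua1)
    exact F.hAconn i (a1 - 1) a1 hiA ha1A (by omega) (by omega)
  have hGb1 : G.L (b0 - 1) < u := by
    rcases eq_or_lt_of_le (G.L_nonneg (b0 - 1)) with h | h
    · linarith
    · obtain ⟨i, hi, hiA⟩ := G.exists_lt_of_L_pos h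
      have h2 : b0 - 1 - 1 ∈ G.A := G.hAconn i (b0 - 1 - 1) (b0 - 1) hiA hb0A' (by omega) (by omega)
      by_contra hc
      push_neg at hc
      have := hb0min (b0 - 1) ⟨hb0A', h2, hc⟩
      omega
  have hGb0succ : v < G.L (b0 + 1) := by
    have h1 := G.L_succ b0
    have h2 := G.hpos b0 hb0A
    linarith
  have hFa1pred : F.L (a1 - 1) < F.L a1 := by
    have h1 := F.L_succ (a1 - 1)
    have h2 : a1 - 1 + 1 = a1 := by ring
    rw [h2] at h1
    have h3 := F.hpos _ ha1A'
    linarith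
  refine ⟨a1, b0, ⟨ha1A, hb0A, ?_⟩, ⟨ha1A', hb0A', ?_⟩⟩
  · exact max_lt (lt_min (lt_of_le_of_lt ha1v hva1) (lt_of_le_of_lt ha1v hGb0succ))
      (lt_min hva1 hGb0succ)
  · have e1 : a1 - 1 + 1 = a1 := by ring
    have e2 : b0 - 1 + 1 = b0 := by ring
    rw [e1, e2]
    exact max_lt (lt_min hFa1pred (lt_of_lt_of_le hFa1pred ha1v))
      (lt_min (lt_of_lt_of_le hGb1 hua1) (lt_of_lt_of_le hGb1 huv0))

lemma exists_diag (F G : DiscDist) :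
    ∃ a b, DRel F G a b ∧ DRel F G (a - 1) (b - 1) := by
  obtain ⟨a0, ha0, ha0'⟩ := F.exists_interior
  obtain ⟨b0, hb0, hb0'⟩ := G.exists_interior
  rcases le_total (F.L a0) (G.L b0) with h | h
  · exact onesided F G a0 b0 ha0 ha0' hb0 hb0' h
  · obtain ⟨b, a, h1, h2⟩ := onesided G F b0 a0 hb0 hb0' ha0 ha0' h
    exact ⟨a, b, DRel_symm h1, DRel_symm h2⟩

/-- For lattice distributions with spacings `cF` and `cG`, the orders
`≼_∧`, `≼_∨` and the condition `[jump heights ordered on dispersion-relevant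
pairs and cF ≤ cG]` are all equivalent. -/
theorem stmt_10 (F G : DiscDist) (cF cG : ℝ) (hcF : 0 < cF) (hcG : 0 < cG)
    (hlatF : ∀ a : ℤ, a ∈ F.A → a + 1 ∈ F.A → F.x (a + 1) - F.x a = cF)
    (hlatG : ∀ b : ℤ, b ∈ G.A → b + 1 ∈ G.A → G.x (b + 1) - G.x b = cG) :
    (discoA F G ↔ discoO F G) ∧
    (discoA F G ↔ ((∀ a b, DRel F G a b → G.p b ≤ F.p a) ∧ cF ≤ cG)) := by
  have hxF : ∀ a : ℤ, a ∈ F.A → a - 1 ∈ F.A → F.x a - F.x (a - 1) = cF := by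
    intro a ha ha'
    have := hlatF (a - 1) ha' (by rw [show a - 1 + 1 = a by ring]; exact ha)
    rwa [show a - 1 + 1 = a by ring] at this
  have hxG : ∀ b : ℤ, b ∈ G.A → b - 1 ∈ G.A → G.x b - G.x (b - 1) = cG := by
    intro b hb hb'
    have := hlatG (b - 1) hb' (by rw [show b - 1 + 1 = b by ring]; exact hb)
    rwa [show b - 1 + 1 = b by ring] at this
  have step1 : discoA F G → cF ≤ cG := by
    intro h
    obtain ⟨a, b, d1, d2⟩ := exists_diag F G
    have := h.2 a b d1 d2
    rwa [hxF a d1.1 d2.1, hxG b d1.2.1 d2.2.1] at this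
  have step2 : ((∀ a b, DRel F G a b → G.p b ≤ F.p a) ∧ cF ≤ cG) → discoO F G := by
    rintro ⟨hH, hc⟩
    refine ⟨hH, fun a b ha ha' hb hb' _ => ?_⟩
    rw [hxF a ha ha', hxG b hb hb']
    exact hc
  have step3 : discoO F G → discoA F G := fun h =>
    ⟨h.1, fun a b d1 d2 => h.2 a b d1.1 d2.1 d1.2.1 d2.2.1 (Or.inl d1)⟩
  exact ⟨⟨fun h => step2 ⟨h.1, step1 h⟩, step3⟩,
    ⟨fun h => ⟨h.1, step1 h⟩, fun h => step3 (step2 h)⟩⟩
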